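/- Let T be a map on finiteness spaces that is monotone for finiteness inclusion ⊑, monotone for finiteness extension ≼, and weakly continuous, i.e. T(⊔_j 𝒜_j) = ⊔_j T(𝒜_j) for every ⊑-directed family (𝒜_j) whose supremum is exact. Let ∅ denote the empty finiteness space (empty web). Then fix T := ⊔_{n∈ℕ} Tⁿ(∅) satisfies T(fix T) = fix T, and fix T ⊑ 𝒴 for every finiteness space 𝒴 with T(𝒴) = 𝒴; i.e. fix T is the ⊑-least fixpoint of T. -/

import Mathlib

open Set

namespace FinitenessPaper

variable {α : Type*}

/-- The predual of a set `F` of subsets of `A`: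
all subsets of `A` whose intersection with every member of `F` is finite. -/
def predual (A : Set α) (F : Set (Set α)) : Set (Set α) :=
  {a' | a' ⊆ A ∧ ∀ a ∈ F, (a ∩ a').Finite}

/-- The predual operation is equal to its own triple iterate. -/
theorem tripredual (A : Set α) (F : Set (Set α)) :
    predual A (predual A (predual A F)) = predual A F := by
  ext h
  constructor
  · rintro ⟨hA, hfin⟩
    refine ⟨hA, fun a ha => ?_⟩
    have hmem : a ∩ A ∈ predual A (predual A F) := by
      refine ⟨inter_subset_right, fun g hg => ?_⟩
      exact (hg.2 a ha).subset fun x hx => ⟨hx.2.1, hx.1⟩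
    exact (hfin _ hmem).subset fun x hx => ⟨⟨hx.1, hA hx.2⟩, hx.2⟩
  · rintro ⟨hA, hfin⟩
    refine ⟨hA, fun g hg => ?_⟩
    exact (hg.2 h ⟨hA, hfin⟩).subset fun x hx => ⟨hx.2, hx.1⟩

/-- A finiteness space: a web together with a finiteness structure on it. -/
structure FinSpace (α : Type*) where
  web : Set α
  fin : Set (Set α)
  isFin : predual web (predual web fin) = fin

/-- Finiteness inclusion order. -/
def fsLE (A B : FinSpace α) : Prop := A.web ⊆ B.web ∧ A.fin ⊆ B.fin

/-- Finiteness extension order. -/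
def fsExt (A B : FinSpace α) : Prop :=
  A.web ⊆ B.web ∧ A.fin = {a ∈ B.fin | a ⊆ A.web}

/-- The `⊑`-supremum of a family of finiteness spaces. -/
def fsSup {ι : Type*} (A : ι → FinSpace α) : FinSpace α :=
  ⟨⋃ i, (A i).web,
   predual (⋃ i, (A i).web) (predual (⋃ i, (A i).web) (⋃ i, (A i).fin)),
   tripredual (⋃ i, (A i).web) (predual (⋃ i, (A i).web) (⋃ i, (A i).fin))⟩

/-- A family of finiteness spaces has an exact supremum when the union of the
finiteness structures is itself a finiteness structure. -/
def ExactFam {ι : Type*} (A : ι → FinSpace α) : Prop :=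
  predual (⋃ i, (A i).web) (predual (⋃ i, (A i).web) (⋃ i, (A i).fin))
    = ⋃ i, (A i).fin

theorem predual_empty (G : Set (Set α)) : predual (∅ : Set α) G = {∅} := by
  ext a
  simp only [predual, Set.mem_setOf_eq, Set.subset_empty_iff, Set.mem_singleton_iff]
  constructor
  · rintro ⟨h, -⟩; exact h
  · rintro rfl; exact ⟨rfl, fun b _ => by simp⟩

/-- The empty finiteness space. -/
def emptyFS (α : Type*) : FinSpace α :=
  ⟨∅, {∅}, by rw [predual_empty]⟩

lemma FinSpace.ext' {A B : FinSpace α} (h1 : A.web = B.web) (h2 : A.fin = B.fin) :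
    A = B := by
  cases A; cases B; dsimp at h1 h2; subst h1; subst h2; rfl

lemma fin_subset_web (A : FinSpace α) {a : Set α} (ha : a ∈ A.fin) : a ⊆ A.web := by
  rw [← A.isFin] at ha; exact ha.1

lemma empty_mem_fin (A : FinSpace α) : (∅ : Set α) ∈ A.fin := by
  rw [← A.isFin]; exact ⟨empty_subset _, fun b _ => by simp⟩

lemma fin_downclosed (A : FinSpace α) {a b : Set α} (ha : a ∈ A.fin) (hb : b ⊆ a) :
    b ∈ A.fin := by
  rw [← A.isFin] at ha ⊢
  exact ⟨hb.trans ha.1, fun g hg => (ha.2 g hg).subset (inter_subset_inter_right _ hb)⟩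

lemma fsExt_refl (A : FinSpace α) : fsExt A A := by
  refine ⟨subset_rfl, ?_⟩
  ext a
  exact ⟨fun h => ⟨h, fin_subset_web A h⟩, fun h => h.1⟩

lemma fsExt_trans {A B C : FinSpace α} (hAB : fsExt A B) (hBC : fsExt B C) :
    fsExt A C := by
  refine ⟨hAB.1.trans hBC.1, ?_⟩
  rw [hAB.2, hBC.2]
  ext a
  exact ⟨fun h => ⟨h.1.1, h.2⟩, fun h => ⟨⟨h.1, h.2.trans hAB.1⟩, h.2⟩⟩

lemma fsExt_empty (B : FinSpace α) : fsExt (emptyFS α) B := by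
  refine ⟨empty_subset _, ?_⟩
  ext a
  simp only [emptyFS, mem_singleton_iff, mem_setOf_eq, subset_empty_iff]
  constructor
  · rintro rfl; exact ⟨empty_mem_fin B, rfl⟩
  · rintro ⟨-, h⟩; exact h

lemma fsExt_to_le {A B : FinSpace α} (h : fsExt A B) : fsLE A B :=
  ⟨h.1, by rw [h.2]; exact fun a ha => ha.1⟩

lemma finite_subset_chain {s : Set α} (hs : s.Finite) (w : ℕ → Set α)
    (hm : Monotone w) (hsub : s ⊆ ⋃ n, w n) : ∃ N, s ⊆ w N := by
  refine Set.Finite.induction_on (motive := fun s _ => s ⊆ (⋃ n, w n) → ∃ N, s ⊆ w N)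
    s hs (fun _ => ⟨0, empty_subset _⟩) ?_ hsub
  intro x s _ _ ih hsub'
  obtain ⟨N, hN⟩ := ih ((subset_insert x s).trans hsub')
  obtain ⟨M, hM⟩ := mem_iUnion.mp (hsub' (mem_insert x s))
  exact ⟨max N M, insert_subset (hm (le_max_right N M) hM)
    (hN.trans (hm (le_max_left N M)))⟩

/-- A `≼`-chain of finiteness spaces has an exact supremum. -/
lemma chain_exact (A : ℕ → FinSpace α)
    (h : ∀ m n, m ≤ n → fsExt (A m) (A n)) : ExactFam A := by
  have hweb : Monotone fun n => (A n).web := fun m n hmn => (h m n hmn).1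
  apply subset_antisymm
  · rintro a ⟨haW, hafin⟩
    by_cases hcase : ∃ n, a ⊆ (A n).web
    · obtain ⟨n, han⟩ := hcase
      refine mem_iUnion.mpr ⟨n, ?_⟩
      rw [← (A n).isFin]
      refine ⟨han, fun b hb => ?_⟩
      refine hafin b ⟨hb.1.trans (subset_iUnion (fun i => (A i).web) n), ?_⟩
      rintro c hc
      obtain ⟨m, hcm⟩ := mem_iUnion.mp hc
      rcases le_total m n with hmn | hnm
      · have : c ∈ (A n).fin := (fsExt_to_le (h m n hmn)).2 hcm
        exact hb.2 c this
      · have hc' : c ∩ (A n).web ∈ (A n).fin := by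
          rw [(h n m hnm).2]
          exact ⟨fin_downclosed (A m) hcm inter_subset_left, inter_subset_right⟩
        have := hb.2 _ hc'
        refine this.subset fun x hx => ⟨⟨hx.1, hb.1 hx.2⟩, hx.2⟩
    · push_neg at hcase
      exfalso
      have hchoice : ∀ n, ∃ x, x ∈ a ∧ x ∉ (A n).web := by
        intro n
        obtain ⟨x, hx1, hx2⟩ := not_subset.mp (hcase n)
        exact ⟨x, hx1, hx2⟩
      choose x hxa hxw using hchoice
      have hb : Set.range x ∈ predual (⋃ i, (A i).web) (⋃ i, (A i).fin) := by
        refine ⟨(range_subset_iff.mpr hxa).trans haW, ?_⟩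
        intro c hc
        obtain ⟨n, hcn⟩ := mem_iUnion.mp hc
        have : c ∩ Set.range x ⊆ x '' (Set.Iio n) := by
          rintro y ⟨hyc, m, rfl⟩
          refine ⟨m, ?_, rfl⟩
          by_contra hmn
          exact hxw m (hweb (le_of_not_gt hmn) (fin_subset_web (A n) hcn hyc))
        exact ((Set.finite_Iio n).image x).subset this
      have hfin : (Set.range x).Finite := by
        have := hafin _ hb
        rwa [inter_eq_left.mpr (range_subset_iff.mpr hxa)] at this
      obtain ⟨N, hN⟩ := finite_subset_chain hfin _ hweb
        ((range_subset_iff.mpr hxa).trans haW)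
      exact hxw N (hN ⟨N, rfl⟩)
  · rintro a ha
    obtain ⟨n, han⟩ := mem_iUnion.mp ha
    refine ⟨(fin_subset_web (A n) han).trans (subset_iUnion (fun i => (A i).web) n),
      fun b hb => ?_⟩
    rw [inter_comm]
    exact hb.2 a ha

lemma fsSup_congr {A B : ℕ → FinSpace α}
    (hw : (⋃ i, (A i).web) = ⋃ i, (B i).web)
    (hf : (⋃ i, (A i).fin) = ⋃ i, (B i).fin) : fsSup A = fsSup B := by
  apply FinSpace.ext'
  · simp only [fsSup]; rw [hw]
  · simp only [fsSup]; rw [hw, hf]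

/-- If `T` is monotone for finiteness inclusion and for finiteness extension and
weakly continuous (commutes with directed suprema when they are exact), then
`fix T = ⊔ₙ Tⁿ(∅)` is the `⊑`-least fixpoint of `T`. -/
theorem weaklyContinuous_least_fixpoint (T : FinSpace α → FinSpace α)
    (hmono_inc : ∀ A B : FinSpace α, fsLE A B → fsLE (T A) (T B))
    (hmono_ext : ∀ A B : FinSpace α, fsExt A B → fsExt (T A) (T B))
    (hcont : ∀ {ι : Type} (A : ι → FinSpace α), Directed fsLE A → ExactFam A →
      T (fsSup A) = fsSup fun i => T (A i)) :
    T (fsSup fun n : ℕ => T^[n] (emptyFS α)) = fsSup (fun n : ℕ => T^[n] (emptyFS α)) ∧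
    ∀ Y : FinSpace α, T Y = Y → fsLE (fsSup fun n : ℕ => T^[n] (emptyFS α)) Y := by
  set A : ℕ → FinSpace α := fun n => T^[n] (emptyFS α) with hA
  have hstep : ∀ n, fsExt (A n) (A (n + 1)) := by
    intro n
    induction n with
    | zero => exact fsExt_empty _
    | succ n ih =>
      have h1 : A (n + 1) = T (A n) := Function.iterate_succ_apply' T n _
      have h2 : A (n + 2) = T (A (n + 1)) := Function.iterate_succ_apply' T (n + 1) _
      rw [h1, h2]
      exact hmono_ext _ _ ih
  have hchain : ∀ m n, m ≤ n → fsExt (A m) (A n) := by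
    intro m n hmn
    induction n, hmn using Nat.le_induction with
    | base => exact fsExt_refl _
    | succ n hmn ih => exact fsExt_trans ih (hstep n)
  have hexact : ExactFam A := chain_exact A hchain
  have hdir : Directed fsLE A := fun m n =>
    ⟨max m n, fsExt_to_le (hchain m _ (le_max_left m n)),
      fsExt_to_le (hchain n _ (le_max_right m n))⟩
  constructor
  · rw [hcont A hdir hexact]
    have heq : (fun n : ℕ => T (A n)) = fun n : ℕ => A (n + 1) := by
      funext n
      exact (Function.iterate_succ_apply' T n _).symm
    rw [heq]
    apply fsSup_congr
    · apply subset_antisymm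
      · exact iUnion_subset fun n => subset_iUnion (fun i => (A i).web) (n + 1)
      · exact iUnion_subset fun n =>
          (hstep n).1.trans (subset_iUnion (fun i => (A (i + 1)).web) n)
    · apply subset_antisymm
      · exact iUnion_subset fun n => subset_iUnion (fun i => (A i).fin) (n + 1)
      · exact iUnion_subset fun n =>
          ((fsExt_to_le (hstep n)).2).trans (subset_iUnion (fun i => (A (i + 1)).fin) n)
  · intro Y hY
    have hle : ∀ n, fsLE (A n) Y := by
      intro n
      induction n with
      | zero =>
        refine ⟨empty_subset _, ?_⟩
        intro a ha
        rw [hA] at ha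
        simp only [Function.iterate_zero_apply, emptyFS, mem_singleton_iff] at ha
        rw [ha]
        exact empty_mem_fin Y
      | succ n ih =>
        have h1 : A (n + 1) = T (A n) := Function.iterate_succ_apply' T n _
        rw [h1, ← hY]
        exact hmono_inc _ _ ih
    refine ⟨iUnion_subset fun n => (hle n).1, ?_⟩
    show predual _ _ ⊆ Y.fin
    rw [show (predual (⋃ i, (A i).web) (predual (⋃ i, (A i).web) (⋃ i, (A i).fin))
        = ⋃ i, (A i).fin) from hexact]
    exact iUnion_subset fun n => (hle n).2

end FinitenessPaper
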